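/- arXiv:0905.1520 — 2 statements merged into one kernel-verified Lean document; each statement's English description precedes it below -/
import Mathlib

section
/- Let X be a compactum and x₀ ∈ X. Then (X, x₀) is a pointed approximative absolute retract if and only if the following holds: whenever Z is a closed subset of a compactum Y, z₀ ∈ Z, and f : Z → X is continuous with f(z₀) = x₀, there is a sequence of continuous maps gₙ : Y → X such that gₙ(z₀) = x₀ for all n and the restrictions of gₙ to Z converge uniformly to f (with respect to any compatible metric on X). -/
open Filter Topology Set TopologicalSpace

/-- `F n` converges uniformly to `f` with respect to every metric on `X`
compatible with its topology. (On a compactum all compatible metrics are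
uniformly equivalent, so this is the usual notion of uniform convergence
"with respect to any compatible metric".) -/
def TendstoUniformlyCompat {Z X : Type*} [tX : TopologicalSpace X]
    (F : ℕ → Z → X) (f : Z → X) : Prop :=
  ∀ m : MetricSpace X, m.toUniformSpace.toTopologicalSpace = tX →
    @TendstoUniformly Z X ℕ m.toUniformSpace F f atTop

/-- A (compact metrizable) space `X` is an approximative absolute retract:
for every compactum `Y` and every topological embedding `ι : X → Y` with closed
image there is a sequence of continuous maps `rₙ : Y → X` with `rₙ ∘ ι`
converging uniformly to the identity of `X`. -/
def IsAAR (X : Type*) [TopologicalSpace X] : Prop :=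
  ∀ (Y : Type*) [TopologicalSpace Y] [CompactSpace Y] [MetrizableSpace Y]
    (ι : X → Y), Topology.IsEmbedding ι → IsClosed (Set.range ι) →
    ∃ r : ℕ → Y → X, (∀ n, Continuous (r n)) ∧
      TendstoUniformlyCompat (fun n x => r n (ι x)) id

/-- A pointed (compact metrizable) space `(X, x₀)` is a pointed approximative
absolute retract: for every compactum `Y` and every topological embedding
`ι : X → Y` with closed image there is a sequence of continuous maps
`rₙ : Y → X` fixing the base point (`rₙ (ι x₀) = x₀`) with `rₙ ∘ ι`
converging uniformly to the identity of `X`. -/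
def IsPointedAAR (X : Type*) [TopologicalSpace X] (x₀ : X) : Prop :=
  ∀ (Y : Type*) [TopologicalSpace Y] [CompactSpace Y] [MetrizableSpace Y]
    (ι : X → Y), Topology.IsEmbedding ι → IsClosed (Set.range ι) →
    ∃ r : ℕ → Y → X, (∀ n, Continuous (r n)) ∧ (∀ n, r n (ι x₀) = x₀) ∧
      TendstoUniformlyCompat (fun n x => r n (ι x)) id

/-- Every nonempty compactum embeds as a closed subspace of the Hilbert cube. -/
lemma exists_closedEmbedding_hilbertCube (W : Type*) [TopologicalSpace W]
    [CompactSpace W] [MetrizableSpace W] [Nonempty W] :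
    ∃ e : W → (ℕ → Set.Icc (0:ℝ) 1), Topology.IsClosedEmbedding e := by
  letI : MetricSpace W := metrizableSpaceMetric W
  set u : ℕ → W := denseSeq W with hu
  have hdense : DenseRange u := denseRange_denseSeq W
  set e : W → (ℕ → Set.Icc (0:ℝ) 1) :=
    fun x n => Set.projIcc 0 1 zero_le_one (dist x (u n)) with he
  have hcont : Continuous e :=
    continuous_pi fun n => continuous_projIcc.comp (continuous_id.dist continuous_const)
  have hinj : Function.Injective e := by
    intro x y hxy
    by_contra hne
    have hd : 0 < dist x y := dist_pos.2 hne
    set ε : ℝ := min (dist x y / 3) (1/2) with hε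
    have hεpos : 0 < ε := lt_min (by linarith) (by norm_num)
    obtain ⟨n, hn⟩ := hdense.exists_dist_lt x hεpos
    have hx1 : dist x (u n) < 1 := lt_of_lt_of_le hn (le_trans (min_le_right _ _) (by norm_num))
    have hxval : (e x n : ℝ) = dist x (u n) := by
      rw [he]
      simp only []
      rw [Set.projIcc_of_mem zero_le_one ⟨dist_nonneg, hx1.le⟩]
    have hyval : (e y n : ℝ) = max 0 (min 1 (dist y (u n))) := by
      rw [he]; rfl
    have hkey : max 0 (min 1 (dist y (u n))) = dist x (u n) := by
      rw [← hyval, ← hxy, hxval]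
    have hmin : min 1 (dist y (u n)) = dist x (u n) := by
      rw [max_eq_right (le_min zero_le_one dist_nonneg)] at hkey
      exact hkey
    have hy1 : dist y (u n) ≤ 1 := by
      by_contra hgt
      push_neg at hgt
      rw [min_eq_left hgt.le] at hmin
      exact absurd hmin.symm (ne_of_lt hx1)
    have hyn : dist y (u n) = dist x (u n) := by
      rw [min_eq_right hy1] at hmin; exact hmin
    have htri : dist x y ≤ dist x (u n) + dist (u n) y := dist_triangle _ _ _
    rw [dist_comm (u n) y, hyn] at htri
    have hε3 : ε ≤ dist x y / 3 := min_le_left _ _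
    linarith
  exact ⟨e, hcont.isClosedEmbedding hinj⟩

instance : MetrizableSpace (ULift.{u} (ℕ → Set.Icc (0:ℝ) 1)) :=
  Homeomorph.ulift.isEmbedding.metrizableSpace

theorem statement4 (X : Type*) [TopologicalSpace X] [CompactSpace X] [MetrizableSpace X]
    (x₀ : X) :
    IsPointedAAR X x₀ ↔
      ∀ (Y : Type*) [TopologicalSpace Y] [CompactSpace Y] [MetrizableSpace Y]
        (Z : Set Y), IsClosed Z → ∀ z₀ : Z, ∀ f : Z → X, Continuous f → f z₀ = x₀ →
        ∃ g : ℕ → Y → X, (∀ n, Continuous (g n)) ∧ (∀ n, g n (z₀ : Y) = x₀) ∧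
          TendstoUniformlyCompat (fun n (z : Z) => g n (z : Y)) f := by
  haveI : Nonempty X := ⟨x₀⟩
  constructor
  · -- pointed AAR → extension property
    intro h Y _ _ _ Z hZ z₀ f hf hf0
    obtain ⟨e, he⟩ := exists_closedEmbedding_hilbertCube X
    -- lift the Hilbert cube to the universe required by `IsPointedAAR`
    set e' : X → ULift (ℕ → Set.Icc (0:ℝ) 1) := fun x => ULift.up (e x) with he'def
    have he' : Topology.IsClosedEmbedding e' :=
      Homeomorph.ulift.symm.isClosedEmbedding.comp he
    obtain ⟨r, hrc, hrp, hrt⟩ := h _ e' he'.toIsEmbedding he'.isClosed_range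
    -- Tietze extension, coordinatewise
    letI : MetricSpace Y := metrizableSpaceMetric Y
    have hφ : ∀ n : ℕ, ∃ G : C(Y, ℝ), ContinuousMap.restrict Z G =
        ⟨fun z => ((e (f z)) n : ℝ), by
          exact continuous_subtype_val.comp ((continuous_apply n).comp (he.continuous.comp hf))⟩ :=
      fun n => ContinuousMap.exists_restrict_eq hZ _
    choose G hG using hφ
    set F : Y → ULift (ℕ → Set.Icc (0:ℝ) 1) :=
      fun y => ULift.up (fun n => Set.projIcc 0 1 zero_le_one (G n y)) with hFdef
    have hFc : Continuous F :=
      Homeomorph.ulift.symm.continuous.comp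
        (continuous_pi fun n => continuous_projIcc.comp (G n).continuous)
    have hFZ : ∀ z : Z, F (z : Y) = e' (f z) := by
      intro z
      have hdown : (F (z : Y)).down = (e' (f z)).down := by
        funext n
        show Set.projIcc 0 1 zero_le_one (G n (z : Y)) = e (f z) n
        have hGz : G n (z : Y) = ((e (f z)) n : ℝ) := by
          have := congrArg (fun φ => φ z) (hG n)
          simpa using this
        rw [hGz, Set.projIcc_val]
      exact congrArg ULift.up hdown
    refine ⟨fun n y => r n (F y), fun n => (hrc n).comp hFc, ?_, ?_⟩
    · intro n
      show r n (F (z₀ : Y)) = x₀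
      rw [hFZ z₀, hf0]
      exact hrp n
    · intro m hm
      have H := (hrt m hm).comp f
      have hEq : (fun n (z : Z) => r n (F (z : Y))) =
          fun n => (fun x => r n (e' x)) ∘ f := by
        funext n z
        simp [Function.comp, hFZ z]
      rw [hEq]
      simpa [Function.comp] using H
  · -- extension property → pointed AAR
    intro h Y _ _ _ ι hι hcl
    haveI : Nonempty Y := ⟨ι x₀⟩
    obtain ⟨j, hj⟩ := exists_closedEmbedding_hilbertCube Y
    set j' : Y → ULift (ℕ → Set.Icc (0:ℝ) 1) := fun y => ULift.up (j y) with hj'def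
    have hj' : Topology.IsClosedEmbedding j' :=
      Homeomorph.ulift.symm.isClosedEmbedding.comp hj
    set k : X → ULift (ℕ → Set.Icc (0:ℝ) 1) := fun x => j' (ι x) with hkdef
    have hk : Topology.IsClosedEmbedding k := hj'.comp ⟨hι, hcl⟩
    set homeo : X ≃ₜ Set.range k := hk.toIsEmbedding.toHomeomorph with hhdef
    have hcoe : ∀ x : X, ((homeo x : Set.range k) : ULift (ℕ → Set.Icc (0:ℝ) 1)) = k x :=
      fun x => rfl
    set z₀' : Set.range k := ⟨k x₀, Set.mem_range_self x₀⟩ with hz₀def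
    have hsymm0 : homeo.symm z₀' = x₀ := by
      rw [show homeo.symm z₀' = homeo.toEquiv.symm z₀' from rfl, Equiv.symm_apply_eq]
      exact Subtype.ext (hcoe x₀).symm
    obtain ⟨g, hgc, hgp, hgt⟩ := h (ULift (ℕ → Set.Icc (0:ℝ) 1)) (Set.range k)
      hk.isClosed_range z₀' (fun z => homeo.symm z) homeo.symm.continuous hsymm0
    refine ⟨fun n y => g n (j' y), fun n => (hgc n).comp hj'.continuous, ?_, ?_⟩
    · intro n
      exact hgp n
    · intro m hm
      have H := (hgt m hm).comp (fun x => homeo x)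
      have hEq : (fun n x => g n (j' (ι x))) =
          fun n => (fun z : Set.range k => g n (z : ULift (ℕ → Set.Icc (0:ℝ) 1))) ∘
            (fun x => homeo x) := by
        funext n x
        simp only [Function.comp]
        rw [hcoe x]
      rw [hEq]
      have hid : ((fun z : Set.range k => homeo.symm z) ∘ fun x => homeo x) = id := by
        funext x
        simp
      rwa [hid] at H
end

section
/- Let X be a compactum, let θₙ : X → X be a sequence of continuous maps converging uniformly to the identity map of X (with respect to a compatible metric on X), and let x₀ ∈ X be a point with θₙ(x₀) = x₀ for all n. If for each n the pair (θₙ(X), x₀), where θₙ(X) carries the subspace topology, is a pointed approximative absolute retract, then (X, x₀) is a pointed approximative absolute retract. -/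
open Filter Topology Set TopologicalSpace

/-- The closed unit interval is a Tietze extension space. -/
instance aux_tietze_Icc : TietzeExtension ↥(Icc (0:ℝ) 1) where
  exists_restrict_eq' s hs f := by
    obtain ⟨g, hg, hres⟩ := ContinuousMap.exists_restrict_eq_forall_mem_of_closed
      (ContinuousMap.comp ⟨Subtype.val, continuous_subtype_val⟩ f)
      (t := Icc (0:ℝ) 1) (fun x => (f x).2) ⟨0, by norm_num⟩ hs
    refine ⟨⟨fun y => ⟨g y, hg y⟩, g.continuous.subtype_mk _⟩, ?_⟩
    ext x
    have := congrFun (congrArg DFunLike.coe hres) x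
    simpa using this

/-- Every nonempty compactum embeds as a closed subset of the Hilbert cube. -/
lemma aux_exists_embed_cube (X : Type*) [TopologicalSpace X] [CompactSpace X] [MetrizableSpace X]
    [Nonempty X] : ∃ e : X → (ℕ → Icc (0:ℝ) 1), Topology.IsClosedEmbedding e := by
  letI := metrizableSpaceMetric X
  obtain ⟨u, hu⟩ := TopologicalSpace.exists_dense_seq X
  set e : X → ℕ → Icc (0:ℝ) 1 :=
    fun x i => ⟨min (dist x (u i)) 1, ⟨le_min dist_nonneg zero_le_one, min_le_right _ _⟩⟩ with he
  have hcont : Continuous e := continuous_pi fun i => Continuous.subtype_mk (by fun_prop) _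
  have hinj : Function.Injective e := by
    intro x y hxy
    have key : ∀ i, min (dist x (u i)) 1 = min (dist y (u i)) 1 :=
      fun i => congrArg Subtype.val (congrFun hxy i)
    have hle : dist x y ≤ 0 := by
      refine le_of_forall_pos_le_add (fun ε hε => ?_)
      obtain ⟨i, hi⟩ := (Metric.denseRange_iff.mp hu) x (min (ε/2) (1/2)) (by positivity)
      have h1 : dist x (u i) < 1 := hi.trans_le (by norm_num [min_le_right])
      have h2 : min (dist y (u i)) 1 = dist x (u i) := by rw [← key i, min_eq_left h1.le]
      have h3 : dist y (u i) < 1 := by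
        rcases min_lt_iff.mp (h2.trans_lt h1) with h | h
        · exact h
        · exact absurd h (lt_irrefl _)
      have h4 : dist y (u i) = dist x (u i) := by rw [← h2, min_eq_left h3.le]
      calc dist x y ≤ dist x (u i) + dist (u i) y := dist_triangle _ _ _
        _ = dist x (u i) + dist x (u i) := by rw [dist_comm (u i) y, h4]
        _ ≤ ε/2 + ε/2 := by have := hi.trans_le (min_le_left _ _); linarith
        _ = 0 + ε := by ring
    exact dist_le_zero.mp hle
  exact ⟨e, hcont.isClosedEmbedding hinj⟩

/-- To prove `TendstoUniformlyCompat` on a compactum it suffices to prove uniform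
convergence with respect to a single compatible metric. -/
lemma aux_tuc_transfer {Z X : Type*} [tX : TopologicalSpace X] [CompactSpace X]
    (m : MetricSpace X) (hm : m.toUniformSpace.toTopologicalSpace = tX)
    {F : ℕ → Z → X} {f : Z → X}
    (h : @TendstoUniformly Z X ℕ m.toUniformSpace F f atTop) :
    TendstoUniformlyCompat F f := by
  intro m' hm'
  rwa [show m'.toUniformSpace = m.toUniformSpace from
    unique_uniformity_of_compact hm' hm]

theorem statement6 (X : Type*) [TopologicalSpace X] [CompactSpace X] [MetrizableSpace X]
    (θ : ℕ → X → X) (hcont : ∀ n, Continuous (θ n))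
    (hconv : TendstoUniformlyCompat (fun n x => θ n x) id)
    (x₀ : X) (hfix : ∀ n, θ n x₀ = x₀)
    (hAAR : ∀ n, IsPointedAAR (Set.range (θ n)) ⟨x₀, ⟨x₀, hfix n⟩⟩) :
    IsPointedAAR X x₀ := by
  intro Y tY cY mY ι hι hclosed
  haveI : Nonempty X := ⟨x₀⟩
  letI mX : MetricSpace X := metrizableSpaceMetric X
  letI : MetricSpace Y := metrizableSpaceMetric Y
  obtain ⟨e, he⟩ := aux_exists_embed_cube X
  have hιc : Topology.IsClosedEmbedding ι := ⟨hι, hclosed⟩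
  -- the ambient Hilbert cube, lifted to the right universe
  set Q := ULift.{u_2} (ℕ → Icc (0:ℝ) 1) with hQ
  haveI : MetrizableSpace Q := (Homeomorph.ulift.isEmbedding).metrizableSpace
  have heQ : Topology.IsClosedEmbedding (fun x => ULift.up (e x) : X → Q) :=
    Homeomorph.ulift.symm.isClosedEmbedding.comp he
  -- Tietze extensions Θ n : Y → Q of (up ∘ e) ∘ θ n ∘ ι⁻¹
  have hΘ : ∀ n, ∃ Θ : C(Y, Q), ∀ x, Θ (ι x) = ULift.up (e (θ n x)) := by
    intro n
    obtain ⟨g, hg⟩ := ContinuousMap.exists_extension' hιc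
      ⟨fun x => e (θ n x), he.continuous.comp (hcont n)⟩
    refine ⟨(ContinuousMap.mk ULift.up Homeomorph.ulift.symm.continuous).comp g, fun x => ?_⟩
    have := congrFun hg x
    simp only [Function.comp_apply] at this
    show ULift.up (g (ι x)) = ULift.up (e (θ n x))
    exact congrArg ULift.up this
  choose Θ hΘ using hΘ
  -- apply the pointed AAR property of each A n = range (θ n) inside Q
  have hkey : ∀ n, ∃ s : ℕ → Q → (Set.range (θ n)), (∀ k, Continuous (s k)) ∧
      (∀ k, s k (ULift.up (e x₀)) = ⟨x₀, ⟨x₀, hfix n⟩⟩) ∧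
      TendstoUniformlyCompat
        (fun k (a : Set.range (θ n)) => s k (ULift.up (e a.val))) id := by
    intro n
    haveI : CompactSpace (Set.range (θ n)) :=
      isCompact_iff_compactSpace.mp (isCompact_range (hcont n))
    have hemb : Topology.IsEmbedding
        (fun a : Set.range (θ n) => (ULift.up (e a.val) : Q)) :=
      heQ.isEmbedding.comp Topology.IsEmbedding.subtypeVal
    have hcl : IsClosed (Set.range (fun a : Set.range (θ n) => (ULift.up (e a.val) : Q))) :=
      (isCompact_range (hemb.continuous)).isClosed
    obtain ⟨s, h1, h2, h3⟩ := hAAR n Q (fun a => ULift.up (e a.val)) hemb hcl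
    exact ⟨s, h1, h2, h3⟩
  choose s hscont hsfix hsconv using hkey
  -- choose good indices k n
  have hk : ∀ n, ∃ k : ℕ, ∀ a : Set.range (θ n),
      dist a (s n k (ULift.up (e a.val))) < 1 / (n + 1 : ℝ) := by
    intro n
    have hconv' := hsconv n (Subtype.metricSpace) rfl
    have := (Metric.tendstoUniformly_iff.mp hconv') (1 / (n + 1 : ℝ)) (by positivity)
    exact this.exists
  choose k hk using hk
  refine ⟨fun n y => (s n (k n) (Θ n y)).val, fun n =>
    continuous_subtype_val.comp ((hscont n (k n)).comp (Θ n).continuous), ?_, ?_⟩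
  · intro n
    have h1 : Θ n (ι x₀) = ULift.up (e x₀) := by rw [hΘ n x₀, hfix n]
    show (s n (k n) (Θ n (ι x₀))).val = x₀
    rw [h1, hsfix n (k n)]
  · refine aux_tuc_transfer mX rfl ?_
    rw [Metric.tendstoUniformly_iff]
    intro ε hε
    have hδ := (Metric.tendstoUniformly_iff.mp (hconv mX rfl)) (ε / 2) (by positivity)
    have hsmall : ∀ᶠ n : ℕ in atTop, 1 / (n + 1 : ℝ) < ε / 2 := by
      have : Tendsto (fun n : ℕ => 1 / ((n : ℝ) + 1)) atTop (𝓝 0) :=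
        tendsto_one_div_add_atTop_nhds_zero_nat
      exact this.eventually (gt_mem_nhds (by positivity))
    filter_upwards [hδ, hsmall] with n h1 h2 x
    have h3 : Θ n (ι x) = ULift.up (e (θ n x)) := hΘ n x
    have h4 := hk n ⟨θ n x, mem_range_self x⟩
    rw [Subtype.dist_eq] at h4
    calc dist (id x) ((s n (k n) (Θ n (ι x))).val)
        ≤ dist x (θ n x) + dist (θ n x) ((s n (k n) (Θ n (ι x))).val) := dist_triangle _ _ _
      _ < ε / 2 + ε / 2 := by
          refine add_lt_add (h1 x) ?_
          rw [h3]
          exact h4.trans h2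
      _ = ε := by ring
end
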